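/- Let M and N be closed subspaces of a Hilbert space H with orthogonal projections Π_M and Π_N. Then ‖Π_M − Π_N‖ = max{ ‖(1 − Π_M)·Π_N‖, ‖(1 − Π_N)·Π_M‖ }, where ‖·‖ is the operator norm. -/

import Mathlib

open ContinuousLinearMap

local notation "⟪" x ", " y "⟫" => @inner ℝ _ _ x y

section KatoAux

variable {H : Type*} [NormedAddCommGroup H] [InnerProductSpace ℝ H]
    [CompleteSpace H]

private lemma kato_pyth {K : Submodule ℝ H} {a b : H} (ha : a ∈ K) (hb : b ∈ Kᗮ) :
    ‖a + b‖ ^ 2 = ‖a‖ ^ 2 + ‖b‖ ^ 2 := by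
  have h : ⟪a, b⟫ = 0 := Submodule.inner_right_of_mem_orthogonal ha hb
  rw [norm_add_sq_real, h]; ring

private lemma kato_proj_mem (K : Submodule ℝ H) [CompleteSpace K] (x : H) :
    K.subtypeL.comp K.orthogonalProjectionOnto x ∈ K := (K.orthogonalProjectionOnto x).2

private lemma kato_sub_proj_mem (K : Submodule ℝ H) [CompleteSpace K] (x : H) :
    x - K.subtypeL.comp K.orthogonalProjectionOnto x ∈ Kᗮ :=
  K.sub_starProjection_mem_orthogonal x

private lemma kato_proj_idem (K : Submodule ℝ H) [CompleteSpace K] (x : H) :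
    K.subtypeL.comp K.orthogonalProjectionOnto (K.subtypeL.comp K.orthogonalProjectionOnto x)
      = K.subtypeL.comp K.orthogonalProjectionOnto x := by
  exact K.starProjection_eq_self_iff.mpr (kato_proj_mem K x)

private lemma kato_proj_norm_le (K : Submodule ℝ H) [CompleteSpace K] (x : H) :
    ‖K.subtypeL.comp K.orthogonalProjectionOnto x‖ ≤ ‖x‖ := by
  set P := K.subtypeL.comp K.orthogonalProjectionOnto
  have h : ‖P x + (x - P x)‖ ^ 2 = ‖P x‖ ^ 2 + ‖x - P x‖ ^ 2 :=
    kato_pyth (kato_proj_mem K x) (kato_sub_proj_mem K x)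
  have h2 : P x + (x - P x) = x := by abel
  rw [h2] at h
  nlinarith [norm_nonneg (P x), norm_nonneg x, sq_nonneg ‖x - P x‖, norm_nonneg (x - P x)]

end KatoAux

theorem kato_gap_formula {H : Type*} [NormedAddCommGroup H] [InnerProductSpace ℝ H]
    [CompleteSpace H] (M N : Submodule ℝ H) [CompleteSpace M] [CompleteSpace N] :
    ‖M.subtypeL.comp M.orthogonalProjectionOnto - N.subtypeL.comp N.orthogonalProjectionOnto‖ =
      max ‖(ContinuousLinearMap.id ℝ H - M.subtypeL.comp M.orthogonalProjectionOnto).comp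
            (N.subtypeL.comp N.orthogonalProjectionOnto)‖
          ‖(ContinuousLinearMap.id ℝ H - N.subtypeL.comp N.orthogonalProjectionOnto).comp
            (M.subtypeL.comp M.orthogonalProjectionOnto)‖ := by
  set P := M.subtypeL.comp M.orthogonalProjectionOnto with hP
  set Q := N.subtypeL.comp N.orthogonalProjectionOnto with hQ
  set A := (ContinuousLinearMap.id ℝ H - P).comp Q with hA
  set B := (ContinuousLinearMap.id ℝ H - Q).comp P with hB
  have hAapp : ∀ x, A x = Q x - P (Q x) := by intro x; simp [hA]
  have hBapp : ∀ x, B x = P x - Q (P x) := by intro x; simp [hB]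
  set c := max ‖A‖ ‖B‖ with hc
  have hc0 : (0 : ℝ) ≤ c := le_trans (norm_nonneg A) (le_max_left _ _)
  apply le_antisymm
  · -- upper bound
    apply ContinuousLinearMap.opNorm_le_bound _ hc0
    intro x
    -- orthogonal decomposition of (P - Q) x
    have hdecomp : (P - Q) x = P (x - Q x) + -(Q x - P (Q x)) := by
      simp only [ContinuousLinearMap.sub_apply, map_sub]
      abel
    have hmem1 : P (x - Q x) ∈ M := kato_proj_mem M _
    have hmem2 : -(Q x - P (Q x)) ∈ Mᗮ := by
      exact Submodule.neg_mem _ (kato_sub_proj_mem M (Q x))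
    have hsq : ‖(P - Q) x‖ ^ 2 = ‖P (x - Q x)‖ ^ 2 + ‖Q x - P (Q x)‖ ^ 2 := by
      rw [hdecomp, kato_pyth hmem1 hmem2, norm_neg]
    -- bound the second term
    have hT2 : ‖Q x - P (Q x)‖ ≤ c * ‖Q x‖ := by
      have : Q x - P (Q x) = A (Q x) := by
        rw [hAapp (Q x), kato_proj_idem N x]
      rw [this]
      calc ‖A (Q x)‖ ≤ ‖A‖ * ‖Q x‖ := A.le_opNorm (Q x)
        _ ≤ c * ‖Q x‖ := by
            exact mul_le_mul_of_nonneg_right (le_max_left _ _) (norm_nonneg _)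
    -- bound the first term
    have hT1 : ‖P (x - Q x)‖ ≤ c * ‖x - Q x‖ := by
      set u := x - Q x with hu
      have huN : u ∈ Nᗮ := kato_sub_proj_mem N x
      have hinner1 : (⟪P u, P u⟫ : ℝ) = ⟪P u, u⟫ := by
        have : (⟪P u, u - P u⟫ : ℝ) = 0 :=
          Submodule.inner_right_of_mem_orthogonal (kato_proj_mem M u) (kato_sub_proj_mem M u)
        rw [inner_sub_right] at this
        linarith [this]
      have hinner2 : (⟪P u, u⟫ : ℝ) = ⟪B (P u), u⟫ := by
        have hBPu : B (P u) = P u - Q (P u) := by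
          rw [hBapp (P u), kato_proj_idem M u]
        have hz : (⟪Q (P u), u⟫ : ℝ) = 0 :=
          Submodule.inner_right_of_mem_orthogonal (kato_proj_mem N (P u)) huN
        rw [hBPu, inner_sub_left, hz, sub_zero]
      have hb : ‖B (P u)‖ ≤ ‖B‖ * ‖P u‖ := B.le_opNorm (P u)
      have hkey : ‖P u‖ ^ 2 ≤ ‖B‖ * ‖P u‖ * ‖u‖ := by
        have h1 : ‖P u‖ ^ 2 = ⟪P u, P u⟫ := (real_inner_self_eq_norm_sq (P u)).symm
        have h2 : (⟪B (P u), u⟫ : ℝ) ≤ ‖B (P u)‖ * ‖u‖ := real_inner_le_norm _ _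
        calc ‖P u‖ ^ 2 = ⟪B (P u), u⟫ := by rw [h1, hinner1, hinner2]
          _ ≤ ‖B (P u)‖ * ‖u‖ := h2
          _ ≤ ‖B‖ * ‖P u‖ * ‖u‖ := by
              exact mul_le_mul_of_nonneg_right hb (norm_nonneg u)
      have hBc : ‖B‖ ≤ c := le_max_right _ _
      rcases eq_or_lt_of_le (norm_nonneg (P u)) with h0 | h0
      · rw [← h0]; positivity
      · have : ‖P u‖ ≤ ‖B‖ * ‖u‖ := by
          nlinarith [norm_nonneg u]
        calc ‖P u‖ ≤ ‖B‖ * ‖u‖ := this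
          _ ≤ c * ‖u‖ := mul_le_mul_of_nonneg_right hBc (norm_nonneg u)
    -- Pythagoras for x
    have hx : ‖x‖ ^ 2 = ‖Q x‖ ^ 2 + ‖x - Q x‖ ^ 2 := by
      have h2 : Q x + (x - Q x) = x := by abel
      rw [← h2, kato_pyth (kato_proj_mem N x) (kato_sub_proj_mem N x), h2]
    have hfin : ‖(P - Q) x‖ ^ 2 ≤ (c * ‖x‖) ^ 2 := by
      rw [hsq]
      have e1 : ‖P (x - Q x)‖ ^ 2 ≤ (c * ‖x - Q x‖) ^ 2 := by
        exact pow_le_pow_left₀ (norm_nonneg _) hT1 2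
      have e2 : ‖Q x - P (Q x)‖ ^ 2 ≤ (c * ‖Q x‖) ^ 2 := by
        exact pow_le_pow_left₀ (norm_nonneg _) hT2 2
      have key : (c * ‖x - Q x‖) ^ 2 + (c * ‖Q x‖) ^ 2 = (c * ‖x‖) ^ 2 := by
        rw [mul_pow, mul_pow, mul_pow, hx]; ring
      linarith [e1, e2, key]
    nlinarith [norm_nonneg ((P - Q) x), mul_nonneg hc0 (norm_nonneg x)]
  · -- lower bound
    apply max_le
    · apply ContinuousLinearMap.opNorm_le_bound _ (norm_nonneg (P - Q))
      intro x
      have h1 : A x = -((P - Q) (Q x)) := by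
        rw [hAapp]
        have : (P - Q) (Q x) = P (Q x) - Q (Q x) := rfl
        rw [this, kato_proj_idem N x]
        abel
      rw [h1, norm_neg]
      calc ‖(P - Q) (Q x)‖ ≤ ‖P - Q‖ * ‖Q x‖ := (P - Q).le_opNorm (Q x)
        _ ≤ ‖P - Q‖ * ‖x‖ :=
            mul_le_mul_of_nonneg_left (kato_proj_norm_le N x) (norm_nonneg _)
    · apply ContinuousLinearMap.opNorm_le_bound _ (norm_nonneg (P - Q))
      intro x
      have h1 : B x = (P - Q) (P x) := by
        rw [hBapp]
        have : (P - Q) (P x) = P (P x) - Q (P x) := rfl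
        rw [this, kato_proj_idem M x]
      rw [h1]
      calc ‖(P - Q) (P x)‖ ≤ ‖P - Q‖ * ‖P x‖ := (P - Q).le_opNorm (P x)
        _ ≤ ‖P - Q‖ * ‖x‖ :=
            mul_le_mul_of_nonneg_left (kato_proj_norm_le M x) (norm_nonneg _)
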